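/- Let (X, Y) be jointly distributed with regular conditional CDF G_x(·) of Y given X = x, and let F : X × ℝ → [0,1] assign a CDF F_x to each x. Then E_{X,Y}[CRPS(F_X, Y)] is minimized over measurable families {F_x} at F_x = G_x for P_X-almost every x, with minimum E_X ∫_ℝ G_X(z)(1 − G_X(z)) dz. -/

import Mathlib

open MeasureTheory Set ProbabilityTheory

open scoped ENNReal

lemma inner_y_integral (μ : Measure ℝ) [IsProbabilityMeasure μ] (c g z : ℝ)
    (hg : g = (μ (Iic z)).toReal) :
    ∫ y, (c - if y ≤ z then (1:ℝ) else 0) ^ 2 ∂μ = (c - g) ^ 2 + g * (1 - g) := by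
  have hindeq : (fun y => if y ≤ z then (1:ℝ) else 0)
      = Set.indicator (Iic z) (fun _ => (1:ℝ)) := by
    funext y; by_cases h : y ≤ z <;> simp [Set.indicator_apply, Set.mem_Iic, h]
  have hind : Integrable (fun y => if y ≤ z then (1:ℝ) else 0) μ := by
    rw [hindeq]; exact (integrable_const (1:ℝ)).indicator measurableSet_Iic
  have hintind : ∫ y, (if y ≤ z then (1:ℝ) else 0) ∂μ = g := by
    rw [hindeq, integral_indicator_const (1:ℝ) measurableSet_Iic, hg, smul_eq_mul, mul_one, measureReal_def]
  have hexp : ∀ y : ℝ, (c - if y ≤ z then (1:ℝ) else 0) ^ 2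
      = c ^ 2 - (2 * c) * (if y ≤ z then (1:ℝ) else 0) + (if y ≤ z then (1:ℝ) else 0) := by
    intro y; by_cases h : y ≤ z <;> simp [h] <;> ring
  calc ∫ y, (c - if y ≤ z then (1:ℝ) else 0) ^ 2 ∂μ
      = ∫ y, (c ^ 2 - (2 * c) * (if y ≤ z then (1:ℝ) else 0)
          + (if y ≤ z then (1:ℝ) else 0)) ∂μ := by simp_rw [hexp]
    _ = (∫ y, (c ^ 2 - (2 * c) * (if y ≤ z then (1:ℝ) else 0)) ∂μ)
          + ∫ y, (if y ≤ z then (1:ℝ) else 0) ∂μ := by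
        exact integral_add ((integrable_const _).sub (hind.const_mul _)) hind
    _ = c ^ 2 - (2 * c) * g + g := by
        rw [integral_sub (integrable_const _) (hind.const_mul _), integral_const,
          integral_const_mul, hintind]
        simp
    _ = (c - g) ^ 2 + g * (1 - g) := by ring

lemma crps_key (μ : Measure ℝ) [IsProbabilityMeasure μ] (F Gf : ℝ → ℝ)
    (hFmono : Monotone F)
    (hGf : ∀ z, Gf z = (μ (Iic z)).toReal)
    (hGint : Integrable (fun z => Gf z * (1 - Gf z)))
    (hFG : Integrable (fun z => (F z - Gf z) ^ 2)) :
    ∫ y, (∫ z, (F z - if y ≤ z then (1:ℝ) else 0) ^ 2) ∂μ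
      = (∫ z, (F z - Gf z) ^ 2) + ∫ z, Gf z * (1 - Gf z) := by
  have hGmono : Monotone Gf := by
    intro a b hab
    rw [hGf a, hGf b]
    exact ENNReal.toReal_mono (measure_ne_top μ _) (measure_mono (Iic_subset_Iic.2 hab))
  have hG0 : ∀ z, 0 ≤ Gf z := fun z => by rw [hGf]; exact ENNReal.toReal_nonneg
  have hG1 : ∀ z, Gf z ≤ 1 := fun z => by
    rw [hGf]
    have : μ (Iic z) ≤ 1 := prob_le_one
    calc (μ (Iic z)).toReal ≤ (1:ℝ≥0∞).toReal :=
      ENNReal.toReal_mono (by norm_num) this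
    _ = 1 := by simp
  have hFmeas := hFmono.measurable
  have hGmeas := hGmono.measurable
  set f : ℝ → ℝ → ℝ := fun y z => (F z - if y ≤ z then (1:ℝ) else 0) ^ 2 with hfdef
  have hindmeas : Measurable (fun p : ℝ × ℝ => if p.1 ≤ p.2 then (1:ℝ) else 0) :=
    Measurable.ite (measurableSet_le measurable_fst measurable_snd)
      measurable_const measurable_const
  have hm : Measurable (Function.uncurry f) := by
    apply Measurable.pow_const
    exact (hFmeas.comp measurable_snd).sub hindmeas
  -- integrability of the two dominating pieces
  set A : ℝ × ℝ → ℝ := fun p => (F p.2 - Gf p.2) ^ 2 with hAdef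
  set B : ℝ × ℝ → ℝ := fun p => (Gf p.2 - if p.1 ≤ p.2 then (1:ℝ) else 0) ^ 2 with hBdef
  have hAmeas : Measurable A := by
    apply Measurable.pow_const
    exact (hFmeas.comp measurable_snd).sub (hGmeas.comp measurable_snd)
  have hBmeas : Measurable B := by
    apply Measurable.pow_const
    exact (hGmeas.comp measurable_snd).sub hindmeas
  have hA : Integrable A (μ.prod volume) := by
    rw [integrable_prod_iff' hAmeas.aestronglyMeasurable]
    constructor
    · filter_upwards with z
      exact integrable_const ((F z - Gf z) ^ 2)
    · have : (fun z => ∫ y, ‖A (y, z)‖ ∂μ) = fun z => |(F z - Gf z) ^ 2| := by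
        funext z; simp [A, Real.norm_eq_abs]
      rw [this]
      have := hFG.abs
      simpa using this
  have hBinner : ∀ z : ℝ, ∫ y, B (y, z) ∂μ = Gf z * (1 - Gf z) := by
    intro z
    have := inner_y_integral μ (Gf z) (Gf z) z (hGf z)
    simpa [B] using this
  have hB : Integrable B (μ.prod volume) := by
    rw [integrable_prod_iff' hBmeas.aestronglyMeasurable]
    constructor
    · filter_upwards with z
      apply Integrable.mono' (integrable_const (1:ℝ))
        ((hBmeas.comp (measurable_id.prodMk measurable_const)).aestronglyMeasurable)
      filter_upwards with y
      have h0 : 0 ≤ Gf z := hG0 z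
      have h1 : Gf z ≤ 1 := hG1 z
      rw [Real.norm_eq_abs, abs_of_nonneg (sq_nonneg _)]
      show (Gf z - if y ≤ z then (1:ℝ) else 0) ^ 2 ≤ 1
      by_cases h : y ≤ z
      · simp only [h, if_true]; nlinarith
      · simp only [h, if_false]; nlinarith
    · have : (fun z => ∫ y, ‖B (y, z)‖ ∂μ) = fun z => Gf z * (1 - Gf z) := by
        funext z
        rw [← hBinner z]
        congr 1; funext y
        rw [Real.norm_eq_abs, abs_of_nonneg (sq_nonneg _)]
      rw [this]; exact hGint
  have hf : Integrable (Function.uncurry f) (μ.prod volume) := by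
    apply Integrable.mono' ((hA.const_mul 2).add (hB.const_mul 2))
      hm.aestronglyMeasurable
    filter_upwards with p
    simp only [Pi.add_apply]
    rw [Real.norm_eq_abs, abs_of_nonneg (sq_nonneg _)]
    show (F p.2 - if p.1 ≤ p.2 then (1:ℝ) else 0) ^ 2
        ≤ 2 * (F p.2 - Gf p.2) ^ 2 + 2 * (Gf p.2 - if p.1 ≤ p.2 then (1:ℝ) else 0) ^ 2
    nlinarith [sq_nonneg ((F p.2 - Gf p.2) - (Gf p.2 - if p.1 ≤ p.2 then (1:ℝ) else 0))]
  have hswap := integral_integral_swap hf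
  calc ∫ y, (∫ z, f y z) ∂μ = ∫ z, ∫ y, f y z ∂μ := hswap
    _ = ∫ z, ((F z - Gf z) ^ 2 + Gf z * (1 - Gf z)) := by
        congr 1; funext z
        exact inner_y_integral μ (F z) (Gf z) z (hGf z)
    _ = (∫ z, (F z - Gf z) ^ 2) + ∫ z, Gf z * (1 - Gf z) := integral_add hFG hGint

/-- With `ν` the law of `X` and `κ x` the conditional law of `Y` given
`X = x` (with conditional CDF `G x`), the expected CRPS over measurable families of
CDFs `x ↦ F x` is minimized at `F = G` (i.e. `F x = G x` for `ν`-a.e. `x`), with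
minimum value `E_X ∫ G_X (1 - G_X)`. -/
theorem expected_conditional_crps_minimized_at_posterior
    {𝒳 : Type*} [MeasurableSpace 𝒳]
    (ν : Measure 𝒳) [IsProbabilityMeasure ν]
    (κ : Kernel 𝒳 ℝ) [IsMarkovKernel κ]
    (G : 𝒳 → ℝ → ℝ)
    (hG : ∀ x z, G x z = (κ x (Iic z)).toReal)
    (hGint : ∀ᵐ x ∂ν, Integrable (fun z => G x z * (1 - G x z)))
    (hGint' : Integrable (fun x => ∫ z, G x z * (1 - G x z)) ν) :
    (∫ x, (∫ y, (∫ z, (G x z - if y ≤ z then (1 : ℝ) else 0) ^ 2) ∂(κ x)) ∂ν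
        = ∫ x, (∫ z, G x z * (1 - G x z)) ∂ν)
    ∧ (∀ F : 𝒳 → ℝ → ℝ,
        Measurable (Function.uncurry F) →
        (∀ x, Monotone (F x)) →
        (∀ x z, F x z ∈ Icc (0 : ℝ) 1) →
        (∀ᵐ x ∂ν, Integrable (fun z => (F x z - G x z) ^ 2)) →
        Integrable (fun x => ∫ z, (F x z - G x z) ^ 2) ν →
        (∫ x, (∫ y, (∫ z, (G x z - if y ≤ z then (1 : ℝ) else 0) ^ 2) ∂(κ x)) ∂ν
            ≤ ∫ x, (∫ y, (∫ z, (F x z - if y ≤ z then (1 : ℝ) else 0) ^ 2) ∂(κ x)) ∂ν)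
        ∧ ((∫ x, (∫ y, (∫ z, (F x z - if y ≤ z then (1 : ℝ) else 0) ^ 2) ∂(κ x)) ∂ν
              = ∫ x, (∫ y, (∫ z, (G x z - if y ≤ z then (1 : ℝ) else 0) ^ 2) ∂(κ x)) ∂ν)
            ↔ ∀ᵐ x ∂ν, F x =ᵐ[volume] G x)) := by
  
  have hGmonoAll : ∀ x, Monotone (G x) := by
    intro x a b hab
    rw [hG x a, hG x b]
    exact ENNReal.toReal_mono (measure_ne_top _ _) (measure_mono (Iic_subset_Iic.2 hab))
  have key : ∀ (F : 𝒳 → ℝ → ℝ), (∀ x, Monotone (F x)) →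
      (∀ᵐ x ∂ν, Integrable (fun z => (F x z - G x z) ^ 2)) →
      ∀ᵐ x ∂ν, (∫ y, (∫ z, (F x z - if y ≤ z then (1:ℝ) else 0) ^ 2) ∂(κ x))
        = (∫ z, (F x z - G x z) ^ 2) + ∫ z, G x z * (1 - G x z) := by
    intro F hFmono hF4
    filter_upwards [hGint, hF4] with x h1 h2
    exact crps_key (κ x) (F x) (G x) (hFmono x) (hG x) h1 h2
  have hGtriv : ∀ᵐ x ∂ν, Integrable (fun z => (G x z - G x z) ^ 2) := by
    filter_upwards with x
    have : (fun z : ℝ => (G x z - G x z) ^ 2) = fun _ => (0:ℝ) := by funext z; ring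
    rw [this]; exact integrable_zero _ _ _
  have hGeq : ∫ x, (∫ y, (∫ z, (G x z - if y ≤ z then (1:ℝ) else 0) ^ 2) ∂(κ x)) ∂ν
      = ∫ x, (∫ z, G x z * (1 - G x z)) ∂ν := by
    apply integral_congr_ae
    filter_upwards [key G hGmonoAll hGtriv] with x hx
    rw [hx]
    have h0 : (∫ z, (G x z - G x z) ^ 2) = 0 := by
      have h1 : (fun z : ℝ => (G x z - G x z) ^ 2) = fun _ => (0:ℝ) := by funext z; ring
      rw [h1, integral_zero]
    rw [h0, zero_add]
  refine ⟨hGeq, ?_⟩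
  intro F hFmeas hFmono hF01 hF4 hF5
  have hFeq : ∫ x, (∫ y, (∫ z, (F x z - if y ≤ z then (1:ℝ) else 0) ^ 2) ∂(κ x)) ∂ν
      = (∫ x, (∫ z, (F x z - G x z) ^ 2) ∂ν) + ∫ x, (∫ z, G x z * (1 - G x z)) ∂ν := by
    rw [integral_congr_ae (key F hFmono hF4)]
    exact integral_add hF5 hGint'
  have hDnn : 0 ≤ ∫ x, (∫ z, (F x z - G x z) ^ 2) ∂ν :=
    integral_nonneg fun x => integral_nonneg fun z => sq_nonneg _
  constructor
  · rw [hGeq, hFeq]; linarith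
  · rw [hFeq, hGeq]
    have hiff : ((∫ x, (∫ z, (F x z - G x z) ^ 2) ∂ν) + (∫ x, (∫ z, G x z * (1 - G x z)) ∂ν)
        = ∫ x, (∫ z, G x z * (1 - G x z)) ∂ν)
        ↔ (∫ x, (∫ z, (F x z - G x z) ^ 2) ∂ν) = 0 := by
      constructor <;> intro h <;> linarith
    rw [hiff,
      integral_eq_zero_iff_of_nonneg (fun x => integral_nonneg fun z => sq_nonneg _) hF5]
    constructor
    · intro h
      filter_upwards [h, hF4] with x hx hint
      have hx0 : ∫ z, (F x z - G x z) ^ 2 = 0 := hx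
      have h2 := (integral_eq_zero_iff_of_nonneg (fun z => sq_nonneg _) hint).1 hx0
      filter_upwards [h2] with z hz
      have hz0 : (F x z - G x z) ^ 2 = 0 := hz
      have := sq_eq_zero_iff.1 hz0
      linarith
    · intro h
      filter_upwards [h] with x hx
      have heq : (fun z => (F x z - G x z) ^ 2) =ᵐ[volume] (fun _ => (0:ℝ)) := by
        filter_upwards [hx] with z hz; simp [hz]
      show (∫ z, (F x z - G x z) ^ 2) = 0
      rw [integral_congr_ae heq, integral_zero]
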